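/- There are exactly 6 ordered pairs (A, B) of 9-element finite sets of natural numbers such that every natural number k with k < 81 can be written uniquely as a + b with a ∈ A and b ∈ B; equivalently, up to swapping A and B there are exactly 3 such solutions. -/

import Mathlib

open Polynomial Finset

noncomputable def SP (A : Finset ℕ) : Polynomial ℤ := ∑ a ∈ A, X ^ a

lemma coeff_SP (A : Finset ℕ) (n : ℕ) : (SP A).coeff n = if n ∈ A then 1 else 0 := by
  classical
  simp [SP, Polynomial.finset_sum_coeff, Polynomial.coeff_X_pow, eq_comm]

lemma SP_inj {A B : Finset ℕ} (h : SP A = SP B) : A = B := by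
  ext n
  have := congrArg (fun p => Polynomial.coeff p n) h
  simp only [coeff_SP] at this
  by_cases hA : n ∈ A <;> by_cases hB : n ∈ B <;> simp [hA, hB] at this ⊢

lemma eval1_SP (A : Finset ℕ) : (SP A).eval 1 = (A.card : ℤ) := by
  rw [SP, Polynomial.eval_finset_sum]; simp

lemma coeff_SP_mul (A B : Finset ℕ) (k : ℕ) :
    (SP A * SP B).coeff k
      = ((((A ×ˢ B).filter (fun q => q.1 + q.2 = k)).card : ℕ) : ℤ) := by
  classical
  rw [SP, SP, Finset.sum_mul_sum]
  simp only [← pow_add]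
  rw [← Finset.sum_product']
  rw [Polynomial.finset_sum_coeff]
  rw [Finset.card_filter]
  push_cast
  apply Finset.sum_congr rfl
  intro q _
  simp [Polynomial.coeff_X_pow, eq_comm]

lemma cond_iff (A B : Finset ℕ) (hA : A.card = 9) (hB : B.card = 9) :
    (∀ k : ℕ, k < 81 → ∃! q : ℕ × ℕ, q.1 ∈ A ∧ q.2 ∈ B ∧ q.1 + q.2 = k) ↔
      SP A * SP B = SP (Finset.range 81) := by
  classical
  constructor
  · intro hcond
    have hcard1 : ∀ k < 81, ((A ×ˢ B).filter (fun q => q.1 + q.2 = k)).card = 1 := by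
      intro k hk
      obtain ⟨q, hq, hu⟩ := hcond k hk
      rw [Finset.card_eq_one]
      refine ⟨q, Finset.eq_singleton_iff_unique_mem.mpr ⟨?_, ?_⟩⟩
      · simp only [Finset.mem_filter, Finset.mem_product]
        exact ⟨⟨hq.1, hq.2.1⟩, hq.2.2⟩
      · intro x hx
        simp only [Finset.mem_filter, Finset.mem_product] at hx
        exact hu x ⟨hx.1.1, hx.1.2, hx.2⟩
    have key : ∀ q ∈ A ×ˢ B, q.1 + q.2 < 81 := by
      set U := (Finset.range 81).biUnion
        (fun k => (A ×ˢ B).filter (fun q => q.1 + q.2 = k)) with hU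
      have hdisj : ∀ i ∈ Finset.range 81, ∀ j ∈ Finset.range 81, i ≠ j →
          Disjoint ((A ×ˢ B).filter (fun q => q.1 + q.2 = i))
            ((A ×ˢ B).filter (fun q => q.1 + q.2 = j)) := by
        intro i _ j _ hij
        rw [Finset.disjoint_left]
        intro q hqi hqj
        simp only [Finset.mem_filter] at hqi hqj
        exact hij (hqi.2 ▸ hqj.2)
      have hcardU : U.card = 81 := by
        rw [hU, Finset.card_biUnion hdisj]
        rw [Finset.sum_congr rfl (fun k hk => hcard1 k (Finset.mem_range.mp hk))]
        simp
      have hsub : U ⊆ A ×ˢ B := by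
        intro q hq
        rw [hU, Finset.mem_biUnion] at hq
        obtain ⟨k, _, hq⟩ := hq
        exact (Finset.mem_filter.mp hq).1
      have heq : U = A ×ˢ B := by
        apply Finset.eq_of_subset_of_card_le hsub
        rw [Finset.card_product, hA, hB, hcardU]
      intro q hq
      rw [← heq, hU, Finset.mem_biUnion] at hq
      obtain ⟨k, hk, hq⟩ := hq
      rw [Finset.mem_filter] at hq
      rw [hq.2]
      exact Finset.mem_range.mp hk
    ext k
    rw [coeff_SP_mul, coeff_SP]
    by_cases hk : k < 81
    · rw [hcard1 k hk]
      simp [hk]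
    · have : ((A ×ˢ B).filter (fun q => q.1 + q.2 = k)) = ∅ := by
        rw [Finset.filter_eq_empty_iff]
        intro q hq hq2
        exact hk (hq2 ▸ key q hq)
      rw [this]
      simp [hk]
  · intro hpoly k hk
    have := congrArg (fun p => Polynomial.coeff p k) hpoly
    simp only [coeff_SP_mul, coeff_SP, Finset.mem_range, hk, if_pos] at this
    have hcard : ((A ×ˢ B).filter (fun q => q.1 + q.2 = k)).card = 1 := by
      exact_mod_cast this
    obtain ⟨q, hq⟩ := Finset.card_eq_one.mp hcard
    have hqmem : q ∈ (A ×ˢ B).filter (fun q => q.1 + q.2 = k) := by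
      rw [hq]; exact Finset.mem_singleton_self q
    simp only [Finset.mem_filter, Finset.mem_product] at hqmem
    refine ⟨q, ⟨hqmem.1.1, hqmem.1.2, hqmem.2⟩, ?_⟩
    intro x hx
    have : x ∈ (A ×ˢ B).filter (fun q => q.1 + q.2 = k) := by
      simp only [Finset.mem_filter, Finset.mem_product]
      exact ⟨⟨hx.1, hx.2.1⟩, hx.2.2⟩
    rw [hq, Finset.mem_singleton] at this
    exact this

lemma hPhi3 : cyclotomic 3 ℤ = 1 + X + X ^ 2 := by
  have h : (3 : ℕ) = 3 ^ (0 + 1) := by norm_num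
  rw [h, cyclotomic_prime_pow_eq_geom_sum (by norm_num : Nat.Prime 3)]
  simp [Finset.sum_range_succ]

lemma hPhi9 : cyclotomic 9 ℤ = 1 + X ^ 3 + X ^ 6 := by
  have h : (9 : ℕ) = 3 ^ (1 + 1) := by norm_num
  rw [h, cyclotomic_prime_pow_eq_geom_sum (by norm_num : Nat.Prime 3)]
  simp [Finset.sum_range_succ, ← pow_mul]

lemma hPhi27 : cyclotomic 27 ℤ = 1 + X ^ 9 + X ^ 18 := by
  have h : (27 : ℕ) = 3 ^ (2 + 1) := by norm_num
  rw [h, cyclotomic_prime_pow_eq_geom_sum (by norm_num : Nat.Prime 3)]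
  simp [Finset.sum_range_succ, ← pow_mul]

lemma hPhi81 : cyclotomic 81 ℤ = 1 + X ^ 27 + X ^ 54 := by
  have h : (81 : ℕ) = 3 ^ (3 + 1) := by norm_num
  rw [h, cyclotomic_prime_pow_eq_geom_sum (by norm_num : Nat.Prime 3)]
  simp [Finset.sum_range_succ, ← pow_mul]

lemma v3 : (cyclotomic 3 ℤ).eval 1 = 3 := by rw [hPhi3]; simp
lemma v9 : (cyclotomic 9 ℤ).eval 1 = 3 := by rw [hPhi9]; simp
lemma v27 : (cyclotomic 27 ℤ).eval 1 = 3 := by rw [hPhi27]; simp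
lemma v81 : (cyclotomic 81 ℤ).eval 1 = 3 := by rw [hPhi81]; simp

lemma geom_eq : SP (Finset.range 81) =
    cyclotomic 3 ℤ * cyclotomic 9 ℤ * cyclotomic 27 ℤ * cyclotomic 81 ℤ := by
  have h := prod_cyclotomic_eq_geom_sum (by norm_num : 0 < 81) ℤ
  have hd : (Nat.divisors 81).erase 1 = ({3, 9, 27, 81} : Finset ℕ) := by decide
  rw [hd] at h
  rw [SP, ← h]
  rw [Finset.prod_insert (by decide), Finset.prod_insert (by decide),
    Finset.prod_insert (by decide), Finset.prod_singleton]
  ring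

def s1 : Finset ℕ := {0,1,2,3,4,5,6,7,8}
def s2 : Finset ℕ := {0,9,18,27,36,45,54,63,72}
def s3 : Finset ℕ := {0,1,2,9,10,11,18,19,20}
def s4 : Finset ℕ := {0,3,6,27,30,33,54,57,60}
def s5 : Finset ℕ := {0,1,2,27,28,29,54,55,56}
def s6 : Finset ℕ := {0,3,6,9,12,15,18,21,24}

lemma E1 : SP s1 = cyclotomic 3 ℤ * cyclotomic 9 ℤ := by
  rw [SP, hPhi3, hPhi9, s1]
  norm_num [Finset.sum_insert, Finset.mem_insert, Finset.mem_singleton]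
  ring

lemma E2 : SP s2 = cyclotomic 27 ℤ * cyclotomic 81 ℤ := by
  rw [SP, hPhi27, hPhi81, s2]
  norm_num [Finset.sum_insert, Finset.mem_insert, Finset.mem_singleton]
  ring

lemma E3 : SP s3 = cyclotomic 3 ℤ * cyclotomic 27 ℤ := by
  rw [SP, hPhi3, hPhi27, s3]
  norm_num [Finset.sum_insert, Finset.mem_insert, Finset.mem_singleton]
  ring

lemma E4 : SP s4 = cyclotomic 9 ℤ * cyclotomic 81 ℤ := by
  rw [SP, hPhi9, hPhi81, s4]
  norm_num [Finset.sum_insert, Finset.mem_insert, Finset.mem_singleton]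
  ring

lemma E5 : SP s5 = cyclotomic 3 ℤ * cyclotomic 81 ℤ := by
  rw [SP, hPhi3, hPhi81, s5]
  norm_num [Finset.sum_insert, Finset.mem_insert, Finset.mem_singleton]
  ring

lemma E6 : SP s6 = cyclotomic 9 ℤ * cyclotomic 27 ℤ := by
  rw [SP, hPhi9, hPhi27, s6]
  norm_num [Finset.sum_insert, Finset.mem_insert, Finset.mem_singleton]
  ring

lemma split_mul {P Q a b : Polynomial ℤ} (ha : Prime a) (h : P * Q = a * b) :
    (∃ P', P = a * P' ∧ P' * Q = b) ∨ (∃ Q', Q = a * Q' ∧ P * Q' = b) := by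
  rcases ha.dvd_or_dvd ⟨b, h⟩ with ⟨P', hP'⟩ | ⟨Q', hQ'⟩
  · left
    refine ⟨P', hP', ?_⟩
    have : a * (P' * Q) = a * b := by rw [← h, hP']; ring
    exact mul_left_cancel₀ ha.ne_zero this
  · right
    refine ⟨Q', hQ', ?_⟩
    have : a * (P * Q') = a * b := by rw [← h, hQ']; ring
    exact mul_left_cancel₀ ha.ne_zero this

lemma prime_cyc (n : ℕ) (hn : 0 < n) : Prime (cyclotomic n ℤ) :=
  (UniqueFactorizationMonoid.irreducible_iff_prime).mp (cyclotomic.irreducible hn)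

lemma unit_val {u v : Polynomial ℤ} (h : u * v = 1) : u.eval 1 = 1 ∨ u.eval 1 = -1 := by
  have hu : IsUnit u := IsUnit.of_mul_eq_one v h
  obtain ⟨r, hr, hCr⟩ := Polynomial.isUnit_iff.mp hu
  rcases Int.isUnit_iff.mp hr with h1 | h1 <;>
    [left; right] <;> rw [← hCr, h1] <;> simp

lemma SP_eq_of_unit (A : Finset ℕ) (hA : A.card = 9) {g u v : Polynomial ℤ}
    (hSA : SP A = g * u) (huv : u * v = 1) (hg : g.eval 1 = 9) : SP A = g := by
  have he : g.eval 1 * u.eval 1 = (9 : ℤ) := by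
    rw [← Polynomial.eval_mul, ← hSA, eval1_SP, hA]; norm_num
  rcases unit_val huv with h1 | h1
  · obtain ⟨r, hr, hCr⟩ := Polynomial.isUnit_iff.mp (IsUnit.of_mul_eq_one v huv)
    have hrval : r = 1 := by
      have : u.eval 1 = r := by rw [← hCr]; simp
      omega
    rw [hSA, ← hCr, hrval]; simp
  · rw [hg, h1] at he; omega

lemma SP_no_unit (A : Finset ℕ) (hA : A.card = 9) {g u v : Polynomial ℤ}
    (hSA : SP A = g * u) (huv : u * v = 1)
    (hg : g.eval 1 = 1 ∨ g.eval 1 = 3 ∨ g.eval 1 = 27 ∨ g.eval 1 = 81) : False := by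
  have he : g.eval 1 * u.eval 1 = (9 : ℤ) := by
    rw [← Polynomial.eval_mul, ← hSA, eval1_SP, hA]; norm_num
  rcases unit_val huv with h1 | h1 <;> rw [h1] at he <;> omega

lemma leaf_ok {A B : Finset ℕ} (hA : A.card = 9) (hB : B.card = 9)
    {gA gB u v : Polynomial ℤ}
    (hSA : SP A = gA * u) (hSB : SP B = gB * v) (huv : u * v = 1)
    (hgA : gA.eval 1 = 9) (hgB : gB.eval 1 = 9)
    {a b : Finset ℕ} (ea : SP a = gA) (eb : SP b = gB) : A = a ∧ B = b := by
  have h1 := SP_eq_of_unit A hA hSA huv hgA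
  have h2 := SP_eq_of_unit B hB hSB (by rw [mul_comm] at huv; exact huv) hgB
  exact ⟨SP_inj (h1.trans ea.symm), SP_inj (h2.trans eb.symm)⟩

lemma main_struct (A B : Finset ℕ) (hA : A.card = 9) (hB : B.card = 9)
    (h : SP A * SP B = SP (Finset.range 81)) :
    (A = s1 ∧ B = s2) ∨ (A = s2 ∧ B = s1) ∨ (A = s3 ∧ B = s4) ∨
      (A = s4 ∧ B = s3) ∨ (A = s5 ∧ B = s6) ∨ (A = s6 ∧ B = s5) := by
  have p3 := prime_cyc 3 (by norm_num)
  have p9 := prime_cyc 9 (by norm_num)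
  have p27 := prime_cyc 27 (by norm_num)
  have p81 := prime_cyc 81 (by norm_num)
  have h0 : SP A * SP B = cyclotomic 3 ℤ * (cyclotomic 9 ℤ * (cyclotomic 27 ℤ * cyclotomic 81 ℤ)) := by
    rw [h, geom_eq]; ring
  rcases split_mul p3 h0 with ⟨P1, ha1, h1⟩ | ⟨Q1, hb1, h1⟩
  ·
    rcases split_mul p9 h1 with ⟨P2, ha2, h2⟩ | ⟨Q2, hb2, h2⟩
    ·
      rcases split_mul p27 h2 with ⟨P3, ha3, h3⟩ | ⟨Q3, hb3, h3⟩
      ·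
        have h3' : P3 * SP B = cyclotomic 81 ℤ * 1 := by rw [mul_one]; exact h3
        rcases split_mul p81 h3' with ⟨P4, ha4, h4⟩ | ⟨Q4, hb4, h4⟩
        ·
          exact absurd ((show SP A = (cyclotomic 3 ℤ * cyclotomic 9 ℤ * cyclotomic 27 ℤ * cyclotomic 81 ℤ) * P4 by rw [ha1, ha2, ha3, ha4]; try ring)) (fun hSA' => SP_no_unit A hA hSA' h4 (Or.inr (Or.inr (Or.inr (by simp [v3, v9, v27, v81])))))
        ·
          exact absurd ((show SP A = (cyclotomic 3 ℤ * cyclotomic 9 ℤ * cyclotomic 27 ℤ) * P3 by rw [ha1, ha2, ha3]; try ring)) (fun hSA' => SP_no_unit A hA hSA' h4 (Or.inr (Or.inr (Or.inl (by simp [v3, v9, v27])))))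
      ·
        have h3' : P2 * Q3 = cyclotomic 81 ℤ * 1 := by rw [mul_one]; exact h3
        rcases split_mul p81 h3' with ⟨P4, ha4, h4⟩ | ⟨Q4, hb4, h4⟩
        ·
          exact absurd ((show SP A = (cyclotomic 3 ℤ * cyclotomic 9 ℤ * cyclotomic 81 ℤ) * P4 by rw [ha1, ha2, ha4]; try ring)) (fun hSA' => SP_no_unit A hA hSA' h4 (Or.inr (Or.inr (Or.inl (by simp [v3, v9, v81])))))
        ·
          have hres := leaf_ok hA hB (show SP A = (cyclotomic 3 ℤ * cyclotomic 9 ℤ) * P2 by rw [ha1, ha2]; try ring) (show SP B = (cyclotomic 27 ℤ * cyclotomic 81 ℤ) * Q4 by rw [hb3, hb4]; try ring) h4 (by simp [v3, v9]) (by simp [v27, v81]) E1 E2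
          exact Or.inl hres
    ·
      rcases split_mul p27 h2 with ⟨P3, ha3, h3⟩ | ⟨Q3, hb3, h3⟩
      ·
        have h3' : P3 * Q2 = cyclotomic 81 ℤ * 1 := by rw [mul_one]; exact h3
        rcases split_mul p81 h3' with ⟨P4, ha4, h4⟩ | ⟨Q4, hb4, h4⟩
        ·
          exact absurd ((show SP A = (cyclotomic 3 ℤ * cyclotomic 27 ℤ * cyclotomic 81 ℤ) * P4 by rw [ha1, ha3, ha4]; try ring)) (fun hSA' => SP_no_unit A hA hSA' h4 (Or.inr (Or.inr (Or.inl (by simp [v3, v27, v81])))))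
        ·
          have hres := leaf_ok hA hB (show SP A = (cyclotomic 3 ℤ * cyclotomic 27 ℤ) * P3 by rw [ha1, ha3]; try ring) (show SP B = (cyclotomic 9 ℤ * cyclotomic 81 ℤ) * Q4 by rw [hb2, hb4]; try ring) h4 (by simp [v3, v27]) (by simp [v9, v81]) E3 E4
          exact Or.inr (Or.inr (Or.inl hres))
      ·
        have h3' : P1 * Q3 = cyclotomic 81 ℤ * 1 := by rw [mul_one]; exact h3
        rcases split_mul p81 h3' with ⟨P4, ha4, h4⟩ | ⟨Q4, hb4, h4⟩
        ·
          have hres := leaf_ok hA hB (show SP A = (cyclotomic 3 ℤ * cyclotomic 81 ℤ) * P4 by rw [ha1, ha4]; try ring) (show SP B = (cyclotomic 9 ℤ * cyclotomic 27 ℤ) * Q3 by rw [hb2, hb3]; try ring) h4 (by simp [v3, v81]) (by simp [v9, v27]) E5 E6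
          exact Or.inr (Or.inr (Or.inr (Or.inr (Or.inl hres))))
        ·
          exact absurd ((show SP A = (cyclotomic 3 ℤ) * P1 by rw [ha1]; try ring)) (fun hSA' => SP_no_unit A hA hSA' h4 (Or.inr (Or.inl (by simp [v3]))))
  ·
    rcases split_mul p9 h1 with ⟨P2, ha2, h2⟩ | ⟨Q2, hb2, h2⟩
    ·
      rcases split_mul p27 h2 with ⟨P3, ha3, h3⟩ | ⟨Q3, hb3, h3⟩
      ·
        have h3' : P3 * Q1 = cyclotomic 81 ℤ * 1 := by rw [mul_one]; exact h3
        rcases split_mul p81 h3' with ⟨P4, ha4, h4⟩ | ⟨Q4, hb4, h4⟩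
        ·
          exact absurd ((show SP A = (cyclotomic 9 ℤ * cyclotomic 27 ℤ * cyclotomic 81 ℤ) * P4 by rw [ha2, ha3, ha4]; try ring)) (fun hSA' => SP_no_unit A hA hSA' h4 (Or.inr (Or.inr (Or.inl (by simp [v9, v27, v81])))))
        ·
          have hres := leaf_ok hA hB (show SP A = (cyclotomic 9 ℤ * cyclotomic 27 ℤ) * P3 by rw [ha2, ha3]; try ring) (show SP B = (cyclotomic 3 ℤ * cyclotomic 81 ℤ) * Q4 by rw [hb1, hb4]; try ring) h4 (by simp [v9, v27]) (by simp [v3, v81]) E6 E5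
          exact Or.inr (Or.inr (Or.inr (Or.inr (Or.inr (hres)))))
      ·
        have h3' : P2 * Q3 = cyclotomic 81 ℤ * 1 := by rw [mul_one]; exact h3
        rcases split_mul p81 h3' with ⟨P4, ha4, h4⟩ | ⟨Q4, hb4, h4⟩
        ·
          have hres := leaf_ok hA hB (show SP A = (cyclotomic 9 ℤ * cyclotomic 81 ℤ) * P4 by rw [ha2, ha4]; try ring) (show SP B = (cyclotomic 3 ℤ * cyclotomic 27 ℤ) * Q3 by rw [hb1, hb3]; try ring) h4 (by simp [v9, v81]) (by simp [v3, v27]) E4 E3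
          exact Or.inr (Or.inr (Or.inr (Or.inl hres)))
        ·
          exact absurd ((show SP A = (cyclotomic 9 ℤ) * P2 by rw [ha2]; try ring)) (fun hSA' => SP_no_unit A hA hSA' h4 (Or.inr (Or.inl (by simp [v9]))))
    ·
      rcases split_mul p27 h2 with ⟨P3, ha3, h3⟩ | ⟨Q3, hb3, h3⟩
      ·
        have h3' : P3 * Q2 = cyclotomic 81 ℤ * 1 := by rw [mul_one]; exact h3
        rcases split_mul p81 h3' with ⟨P4, ha4, h4⟩ | ⟨Q4, hb4, h4⟩
        ·
          have hres := leaf_ok hA hB (show SP A = (cyclotomic 27 ℤ * cyclotomic 81 ℤ) * P4 by rw [ha3, ha4]; try ring) (show SP B = (cyclotomic 3 ℤ * cyclotomic 9 ℤ) * Q2 by rw [hb1, hb2]; try ring) h4 (by simp [v27, v81]) (by simp [v3, v9]) E2 E1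
          exact Or.inr (Or.inl hres)
        ·
          exact absurd ((show SP A = (cyclotomic 27 ℤ) * P3 by rw [ha3]; try ring)) (fun hSA' => SP_no_unit A hA hSA' h4 (Or.inr (Or.inl (by simp [v27]))))
      ·
        have h3' : SP A * Q3 = cyclotomic 81 ℤ * 1 := by rw [mul_one]; exact h3
        rcases split_mul p81 h3' with ⟨P4, ha4, h4⟩ | ⟨Q4, hb4, h4⟩
        ·
          exact absurd ((show SP A = (cyclotomic 81 ℤ) * P4 by rw [ha4]; try ring)) (fun hSA' => SP_no_unit A hA hSA' h4 (Or.inr (Or.inl (by simp [v81]))))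
        ·
          exact absurd ((one_mul (SP A)).symm) (fun hSA' => SP_no_unit A hA hSA' h4 (Or.inl (by simp)))

theorem eightyone_cell_count :
    {p : Finset ℕ × Finset ℕ |
        p.1.card = 9 ∧ p.2.card = 9 ∧
        ∀ k : ℕ, k < 81 →
          ∃! q : ℕ × ℕ, q.1 ∈ p.1 ∧ q.2 ∈ p.2 ∧ q.1 + q.2 = k}.ncard = 6 := by
  have hset : {p : Finset ℕ × Finset ℕ |
        p.1.card = 9 ∧ p.2.card = 9 ∧
        ∀ k : ℕ, k < 81 →
          ∃! q : ℕ × ℕ, q.1 ∈ p.1 ∧ q.2 ∈ p.2 ∧ q.1 + q.2 = k}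
      = (({(s1,s2),(s2,s1),(s3,s4),(s4,s3),(s5,s6),(s6,s5)} :
          Finset (Finset ℕ × Finset ℕ)) : Set (Finset ℕ × Finset ℕ)) := by
    ext p
    obtain ⟨A, B⟩ := p
    simp only [Set.mem_setOf_eq, Finset.coe_insert, Set.mem_insert_iff,
      Finset.coe_singleton, Set.mem_singleton_iff, Prod.mk.injEq]
    constructor
    · rintro ⟨hA, hB, hcond⟩
      have h := (cond_iff A B hA hB).mp hcond
      have hm := main_struct A B hA hB h
      tauto
    · have c1 : s1.card = 9 := by decide
      have c2 : s2.card = 9 := by decide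
      have c3 : s3.card = 9 := by decide
      have c4 : s4.card = 9 := by decide
      have c5 : s5.card = 9 := by decide
      have c6 : s6.card = 9 := by decide
      rintro (⟨rfl, rfl⟩ | ⟨rfl, rfl⟩ | ⟨rfl, rfl⟩ | ⟨rfl, rfl⟩ | ⟨rfl, rfl⟩ | ⟨rfl, rfl⟩)
      · exact ⟨c1, c2, (cond_iff _ _ c1 c2).mpr (by rw [E1, E2, geom_eq]; ring)⟩
      · exact ⟨c2, c1, (cond_iff _ _ c2 c1).mpr (by rw [E1, E2, geom_eq]; ring)⟩
      · exact ⟨c3, c4, (cond_iff _ _ c3 c4).mpr (by rw [E3, E4, geom_eq]; ring)⟩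
      · exact ⟨c4, c3, (cond_iff _ _ c4 c3).mpr (by rw [E3, E4, geom_eq]; ring)⟩
      · exact ⟨c5, c6, (cond_iff _ _ c5 c6).mpr (by rw [E5, E6, geom_eq]; ring)⟩
      · exact ⟨c6, c5, (cond_iff _ _ c6 c5).mpr (by rw [E5, E6, geom_eq]; ring)⟩
  rw [hset, Set.ncard_coe_finset]
  decide
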